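/- Let M1, M2 be integers with 4 ≤ M1 ≤ M2, and let D* = ([0,1/2]×[0,1/2]) \ ([0,1/M1]×[0,1/M2]). Then 4·∬_{D*} 1/(4 − 2·cos(2πx) − 2·cos(2πy)) dx dy ≥ (1/(2π))·log M1 − 1/4, where log denotes the natural logarithm. -/

import Mathlib

open Real MeasureTheory

private lemma arctan_le_self' {t : ℝ} (ht : 0 ≤ t) : Real.arctan t ≤ t := by
  rcases eq_or_lt_of_le ht with h | h
  · simp [← h]
  · rcases lt_or_ge t (π/2) with h2 | h2
    · have h3 : t < Real.tan t := Real.lt_tan h h2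
      calc Real.arctan t ≤ Real.arctan (Real.tan t) :=
            Real.arctan_strictMono.monotone h3.le
        _ = t := Real.arctan_tan (by linarith [Real.pi_pos]) h2
    · exact le_trans (Real.arctan_lt_pi_div_two t).le h2

private lemma cos2pi_lt_one' {x : ℝ} (hx : 0 < x) (hx2 : x ≤ 1/2) : Real.cos (2*π*x) < 1 := by
  have hπ := Real.pi_pos
  refine lt_of_le_of_ne (Real.cos_le_one _) ?_
  intro h
  have h2 : 2*π*x = 0 :=
    (Real.cos_eq_one_iff_of_lt_of_lt (by nlinarith) (by nlinarith)).mp h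
  nlinarith

private lemma denom_pos' {x y : ℝ} (hx : 0 ≤ x) (hx2 : x ≤ 1/2) (hy : 0 ≤ y) (hy2 : y ≤ 1/2)
    (h : 0 < x ∨ 0 < y) : 0 < 4 - 2 * Real.cos (2*π*x) - 2 * Real.cos (2*π*y) := by
  have c1 := Real.cos_le_one (2*π*x)
  have c2 := Real.cos_le_one (2*π*y)
  rcases h with h | h
  · have := cos2pi_lt_one' h hx2; linarith
  · have := cos2pi_lt_one' h hy2; linarith

private lemma denom_le' (x y : ℝ) :
    4 - 2 * Real.cos (2*π*x) - 2 * Real.cos (2*π*y) ≤ 4*π^2*(x^2+y^2) := by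
  have h1 := Real.one_sub_sq_div_two_le_cos (x := 2*π*x)
  have h2 := Real.one_sub_sq_div_two_le_cos (x := 2*π*y)
  nlinarith [sq_nonneg x, sq_nonneg y, Real.pi_pos]

private lemma inner_int' {x : ℝ} (hx : 0 < x) :
    ∫ y in Set.Icc (0:ℝ) (1/2), 1 / (4*π^2*(x^2+y^2)) =
      (1/(4*π^2)) * (Real.arctan (1/(2*x)) / x) := by
  have hπ := Real.pi_pos
  have hx' : x ≠ 0 := hx.ne'
  rw [MeasureTheory.integral_Icc_eq_integral_Ioc,
    ← intervalIntegral.integral_of_le (by norm_num : (0:ℝ) ≤ 1/2)]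
  have key : ∀ y : ℝ, 1/(4*π^2*(x^2+y^2)) = (1/(4*π^2*x^2)) * (1 + (y/x)^2)⁻¹ := by
    intro y
    have h0 : (1:ℝ) + (y/x)^2 = (x^2+y^2)/x^2 := by field_simp
    rw [h0]
    have hxy : (0:ℝ) < x^2 + y^2 := by positivity
    field_simp
  simp only [key]
  rw [intervalIntegral.integral_const_mul]
  have h2 : (∫ y in (0:ℝ)..(1/2), (1 + (y/x)^2)⁻¹) =
      x • ∫ t in (0:ℝ)/x..(1/2)/x, (1+t^2)⁻¹ :=
    intervalIntegral.integral_comp_div (fun t => (1+t^2)⁻¹) hx'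
  rw [h2, integral_inv_one_add_sq, zero_div]
  simp only [Real.arctan_zero, sub_zero, smul_eq_mul]
  rw [show (1/2:ℝ)/x = 1/(2*x) by field_simp]
  field_simp

theorem integral_Dstar_lower (M1 M2 : ℕ) (h1 : 4 ≤ M1) (h12 : M1 ≤ M2) :
    4 * ∫ p in ((Set.Icc (0:ℝ) (1/2) ×ˢ Set.Icc (0:ℝ) (1/2)) \
        (Set.Icc (0:ℝ) (1/(M1:ℝ)) ×ˢ Set.Icc (0:ℝ) (1/(M2:ℝ)))),
        1 / (4 - 2 * Real.cos (2 * Real.pi * p.1) - 2 * Real.cos (2 * Real.pi * p.2))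
      ≥ (1 / (2 * Real.pi)) * Real.log M1 - 1 / 4 := by
  have hπ := Real.pi_pos
  set a : ℝ := 1/(M1:ℝ) with ha_def
  set b : ℝ := 1/(M2:ℝ) with hb_def
  have hM1 : (4:ℝ) ≤ (M1:ℝ) := by exact_mod_cast h1
  have hM1pos : (0:ℝ) < M1 := by linarith
  have hM2 : (M1:ℝ) ≤ (M2:ℝ) := by exact_mod_cast h12
  have hM2pos : (0:ℝ) < M2 := hM1pos.trans_le hM2
  have hapos : 0 < a := by rw [ha_def]; positivity
  have ha4 : a ≤ 1/4 := by
    rw [ha_def, div_le_div_iff₀ hM1pos (by norm_num)]; linarith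
  have ha12 : a ≤ 1/2 := ha4.trans (by norm_num)
  have hbpos : 0 < b := by rw [hb_def]; positivity
  set f : ℝ×ℝ → ℝ :=
    fun p => 1 / (4 - 2 * Real.cos (2 * Real.pi * p.1) - 2 * Real.cos (2 * Real.pi * p.2))
    with hf_def
  set sq : Set (ℝ×ℝ) := Set.Icc (0:ℝ) (1/2) ×ˢ Set.Icc (0:ℝ) (1/2) with hsq_def
  set D : Set (ℝ×ℝ) := sq \ (Set.Icc (0:ℝ) a ×ˢ Set.Icc (0:ℝ) b) with hD_def
  set C : Set (ℝ×ℝ) := sq \ (Set.Iio a ×ˢ Set.Iio b) with hC_def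
  set S : Set (ℝ×ℝ) := Set.Icc a (1/2) ×ˢ Set.Icc (0:ℝ) (1/2) with hS_def
  -- nonnegativity of f
  have hf_nonneg : ∀ p : ℝ×ℝ, 0 ≤ f p := by
    intro p
    have c1 := Real.cos_le_one (2*π*p.1)
    have c2 := Real.cos_le_one (2*π*p.2)
    apply div_nonneg zero_le_one
    linarith
  -- denominator positive on C
  have hCdenom : ∀ p ∈ C, 0 < 4 - 2 * Real.cos (2*π*p.1) - 2 * Real.cos (2*π*p.2) := by
    rintro ⟨x, y⟩ hp
    simp only [hC_def, hsq_def, Set.mem_diff, Set.mem_prod, Set.mem_Icc, Set.mem_Iio,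
      not_and, not_lt] at hp
    obtain ⟨⟨⟨hx0, hx2⟩, hy0, hy2⟩, h⟩ := hp
    rcases lt_or_ge x a with hxa | hxa
    · exact denom_pos' hx0 hx2 hy0 hy2 (Or.inr (lt_of_lt_of_le hbpos (h hxa)))
    · exact denom_pos' hx0 hx2 hy0 hy2 (Or.inl (lt_of_lt_of_le hapos hxa))
  have hfC_cont : ContinuousOn f C := by
    rw [hf_def]
    apply ContinuousOn.div continuousOn_const (by fun_prop)
    intro p hp
    exact (hCdenom p hp).ne'
  have hCclosed : IsClosed C :=
    (isClosed_Icc.prod isClosed_Icc).sdiff (isOpen_Iio.prod isOpen_Iio)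
  have hCcomp : IsCompact C :=
    (isCompact_Icc.prod isCompact_Icc).of_isClosed_subset hCclosed Set.diff_subset
  have hfC : IntegrableOn f C := hfC_cont.integrableOn_compact hCcomp
  have hDC : D ⊆ C := by
    rintro ⟨x, y⟩ ⟨hsqm, hR⟩
    refine ⟨hsqm, fun hmem => hR ?_⟩
    exact ⟨⟨hsqm.1.1, le_of_lt hmem.1⟩, hsqm.2.1, le_of_lt hmem.2⟩
  have hfD : IntegrableOn f D := hfC.mono_set hDC
  have hSC : S ⊆ C := by
    rintro ⟨x, y⟩ ⟨hx, hy⟩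
    exact ⟨⟨⟨hapos.le.trans hx.1, hx.2⟩, hy⟩, fun hc => absurd hx.1 (not_le.mpr hc.1)⟩
  have hfS : IntegrableOn f S := hfC.mono_set hSC
  -- step 1 : ∫_S f ≤ ∫_D f
  have hnull : (volume : Measure (ℝ×ℝ)) (({a} : Set ℝ) ×ˢ (Set.univ : Set ℝ)) = 0 := by
    rw [Measure.volume_eq_prod, Measure.prod_prod]
    simp
  have hSD : S ≤ᵐ[volume] D := by
    rw [ae_le_set]
    refine measure_mono_null ?_ hnull
    rintro ⟨x, y⟩ ⟨hS, hD⟩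
    have hsq' : (x, y) ∈ sq := ⟨⟨hapos.le.trans hS.1.1, hS.1.2⟩, hS.2⟩
    have hR : (x, y) ∈ Set.Icc (0:ℝ) a ×ˢ Set.Icc (0:ℝ) b := by
      by_contra hc
      exact hD ⟨hsq', hc⟩
    simp only [Set.mem_prod, Set.mem_singleton_iff, Set.mem_univ, and_true]
    exact le_antisymm hR.1.2 hS.1.1
  have step1 : ∫ p in S, f p ≤ ∫ p in D, f p :=
    setIntegral_mono_set hfD (Filter.Eventually.of_forall hf_nonneg) hSD
  -- step 2 : ∫_S g ≤ ∫_S f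
  set g : ℝ×ℝ → ℝ := fun p => 1 / (4*π^2*(p.1^2+p.2^2)) with hg_def
  have hgS_cont : ContinuousOn g S := by
    rw [hg_def]
    apply ContinuousOn.div continuousOn_const (by fun_prop)
    rintro ⟨x, y⟩ ⟨hx, hy⟩
    have hx0 : 0 < x := lt_of_lt_of_le hapos hx.1
    positivity
  have hScomp : IsCompact S := isCompact_Icc.prod isCompact_Icc
  have hgS : IntegrableOn g S := hgS_cont.integrableOn_compact hScomp
  have step2 : ∫ p in S, g p ≤ ∫ p in S, f p := by
    apply setIntegral_mono_on hgS hfS (measurableSet_Icc.prod measurableSet_Icc)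
    rintro ⟨x, y⟩ ⟨hx, hy⟩
    have hx0 : 0 < x := lt_of_lt_of_le hapos hx.1
    have hd : 0 < 4 - 2 * Real.cos (2*π*x) - 2 * Real.cos (2*π*y) :=
      denom_pos' hx0.le hx.2 hy.1 hy.2 (Or.inl hx0)
    simp only [hf_def, hg_def]
    exact one_div_le_one_div_of_le hd (denom_le' x y)
  -- step 3 : Fubini
  have step3 : ∫ p in S, g p = ∫ x in Set.Icc a (1/2), ∫ y in Set.Icc (0:ℝ) (1/2), g (x, y) := by
    rw [hS_def] at hgS ⊢
    exact setIntegral_prod g hgS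
  -- step 4 : inner integral
  have step4 : ∫ x in Set.Icc a (1/2), ∫ y in Set.Icc (0:ℝ) (1/2), g (x, y)
      = ∫ x in Set.Icc a (1/2), (1/(4*π^2)) * (Real.arctan (1/(2*x)) / x) := by
    apply setIntegral_congr_fun measurableSet_Icc
    intro x hx
    have hx0 : 0 < x := lt_of_lt_of_le hapos hx.1
    simp only [hg_def]
    exact inner_int' hx0
  -- step 5 : lower bound the outer integrand
  set ψ : ℝ → ℝ := fun x => (1/(4*π^2)) * ((π/2) * (1/x) - 2) with hψ_def
  have step5 : ∫ x in Set.Icc a (1/2), ψ x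
      ≤ ∫ x in Set.Icc a (1/2), (1/(4*π^2)) * (Real.arctan (1/(2*x)) / x) := by
    have hψcont : ContinuousOn ψ (Set.Icc a (1/2)) := by
      rw [hψ_def]
      apply ContinuousOn.mul continuousOn_const
      apply ContinuousOn.sub ?_ continuousOn_const
      apply ContinuousOn.mul continuousOn_const
      apply ContinuousOn.div continuousOn_const continuousOn_id
      intro x hx
      exact (lt_of_lt_of_le hapos hx.1).ne'
    have hφcont : ContinuousOn (fun x => (1/(4*π^2)) * (Real.arctan (1/(2*x)) / x))
        (Set.Icc a (1/2)) := by
      apply ContinuousOn.mul continuousOn_const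
      apply ContinuousOn.div ?_ continuousOn_id ?_
      · apply Real.continuous_arctan.comp_continuousOn
        apply ContinuousOn.div continuousOn_const (by fun_prop)
        intro x hx
        have := lt_of_lt_of_le hapos hx.1
        positivity
      · intro x hx
        exact (lt_of_lt_of_le hapos hx.1).ne'
    apply setIntegral_mono_on (hψcont.integrableOn_compact isCompact_Icc)
      (hφcont.integrableOn_compact isCompact_Icc) measurableSet_Icc
    intro x hx
    have hx0 : 0 < x := lt_of_lt_of_le hapos hx.1
    have harc : Real.arctan (1/(2*x)) = π/2 - Real.arctan (2*x) := by
      rw [one_div]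
      exact Real.arctan_inv_of_pos (by positivity)
    have hata : Real.arctan (2*x) ≤ 2*x := arctan_le_self' (by positivity)
    simp only [hψ_def]
    rw [harc]
    apply mul_le_mul_of_nonneg_left ?_ (by positivity)
    have hkey : (π/2 - Real.arctan (2*x))/x - ((π/2) * (1/x) - 2)
        = (2*x - Real.arctan (2*x))/x := by
      field_simp
      ring
    have h2 : 0 ≤ (2*x - Real.arctan (2*x))/x := div_nonneg (by linarith) hx0.le
    linarith [hkey ▸ h2]
  -- step 6 : evaluate ∫ ψ
  have step6 : ∫ x in Set.Icc a (1/2), ψ x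
      = (1/(4*π^2)) * ((π/2) * Real.log ((1/2)/a) - 2 * (1/2 - a)) := by
    rw [MeasureTheory.integral_Icc_eq_integral_Ioc, ← intervalIntegral.integral_of_le ha12]
    simp only [hψ_def]
    rw [intervalIntegral.integral_const_mul]
    have h0 : (0:ℝ) ∉ Set.uIcc a (1/2) := by
      rw [Set.uIcc_of_le ha12]
      intro hc
      exact absurd hc.1 (not_le.mpr hapos)
    have hc1 : ContinuousOn (fun x : ℝ => (π/2) * (1/x)) (Set.uIcc a (1/2)) := by
      apply ContinuousOn.mul continuousOn_const
      apply ContinuousOn.div continuousOn_const continuousOn_id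
      intro x hx h
      exact h0 (h ▸ hx)
    rw [intervalIntegral.integral_sub hc1.intervalIntegrable intervalIntegrable_const,
      intervalIntegral.integral_const_mul, integral_one_div h0,
      intervalIntegral.integral_const]
    simp only [smul_eq_mul]
    ring
  have hlog : Real.log ((1/2)/a) = Real.log M1 - Real.log 2 := by
    rw [ha_def, show (1/2 : ℝ)/(1/(M1:ℝ)) = (M1:ℝ)/2 by field_simp]
    exact Real.log_div (ne_of_gt hM1pos) two_ne_zero
  have chain : (1/(4*π^2)) * ((π/2) * (Real.log M1 - Real.log 2) - 2*(1/2 - a))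
      ≤ ∫ p in D, f p := by
    calc (1/(4*π^2)) * ((π/2) * (Real.log M1 - Real.log 2) - 2*(1/2 - a))
        = ∫ x in Set.Icc a (1/2), ψ x := by rw [step6, hlog]
      _ ≤ ∫ x in Set.Icc a (1/2), (1/(4*π^2)) * (Real.arctan (1/(2*x)) / x) := step5
      _ = ∫ p in S, g p := by rw [step3, step4]
      _ ≤ ∫ p in S, f p := step2
      _ ≤ ∫ p in D, f p := step1
  rw [ge_iff_le]
  have hπ2 : (0:ℝ) < π^2 := by positivity
  have hnum : 0 ≤ π^2/4 - (π/2) * Real.log 2 - 1 + 2*a := by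
    nlinarith [Real.pi_gt_d6, Real.pi_lt_d2, Real.log_two_lt_d9, Real.log_pos (by norm_num : (1:ℝ) < 2),
      hapos.le]
  have hkey : (1/(2*π)) * Real.log M1 - 1/4
      ≤ 4 * ((1/(4*π^2)) * ((π/2) * (Real.log M1 - Real.log 2) - 2*(1/2 - a))) := by
    rw [← sub_nonneg]
    have hrw : 4 * ((1/(4*π^2)) * ((π/2) * (Real.log M1 - Real.log 2) - 2*(1/2 - a)))
        - ((1/(2*π)) * Real.log M1 - 1/4)
        = (π^2/4 - (π/2) * Real.log 2 - 1 + 2*a) / π^2 := by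
      field_simp
      ring
    rw [hrw]
    exact div_nonneg hnum hπ2.le
  linarith [chain]
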